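/- The Mellin transform of F(x) = Σ_{k≥1} e^{-(2k-1)x}/(1+e^{-(2k-1)x})², for x > 0, equals Γ(s)·ζ(s-1)·ζ(s)·(1-2^{2-s})·(1-2^{-s}) for real s > 2, i.e., ∫₀^∞ F(x) x^{s-1} dx = Γ(s)ζ(s-1)ζ(s)(1-2^{2-s})(1-2^{-s}). -/

import Mathlib

open Complex MeasureTheory Set

private lemma hasSum_zeta_aux {c : ℂ} (hc : 1 < c.re) :
    HasSum (fun n : ℕ => (n : ℂ) ^ (-c)) (riemannZeta c) := by
  have hsum : Summable (fun n : ℕ => (n : ℂ) ^ (-c)) := by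
    simpa [cpow_neg, one_div] using Complex.summable_one_div_nat_cpow.mpr hc
  have h : riemannZeta c = ∑' n : ℕ, (n : ℂ) ^ (-c) := by
    rw [zeta_eq_tsum_one_div_nat_cpow hc]
    simp [cpow_neg, one_div]
  rw [h]; exact hsum.hasSum

private lemma hasSum_odd_zeta {c : ℂ} (hc : 1 < c.re) :
    HasSum (fun k : ℕ => (2 * (k : ℂ) + 1) ^ (-c))
      ((1 - 2 ^ (-c)) * riemannZeta c) := by
  have hZ := hasSum_zeta_aux hc
  set f : ℕ → ℂ := fun n => (n : ℂ) ^ (-c) with hf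
  have hfe : (fun k : ℕ => f (2 * k)) = fun k : ℕ => 2 ^ (-c) * (k : ℂ) ^ (-c) := by
    funext k
    simp only [hf]
    rw [show (((2 * k : ℕ) : ℂ)) = ((2 : ℕ) : ℂ) * (k : ℂ) by push_cast; ring,
      natCast_mul_natCast_cpow]
    norm_num
  have he : HasSum (fun k : ℕ => f (2 * k)) (2 ^ (-c) * riemannZeta c) := by
    rw [hfe]; exact hZ.mul_left _
  have ho : Summable (fun k : ℕ => f (2 * k + 1)) :=
    hZ.summable.comp_injective (fun a b h => by omega)
  have h2 : HasSum f (2 ^ (-c) * riemannZeta c + ∑' k : ℕ, f (2 * k + 1)) :=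
    he.even_add_odd ho.hasSum
  have hval : 2 ^ (-c) * riemannZeta c + ∑' k : ℕ, f (2 * k + 1)
      = riemannZeta c := h2.unique hZ
  have h3 : HasSum (fun k : ℕ => f (2 * k + 1)) ((1 - 2 ^ (-c)) * riemannZeta c) := by
    have h4 := ho.hasSum
    rwa [show (∑' k : ℕ, f (2 * k + 1)) = (1 - 2 ^ (-c)) * riemannZeta c by
      linear_combination hval] at h4
  have hfe2 : (fun k : ℕ => f (2 * k + 1))
      = fun k : ℕ => (2 * (k : ℂ) + 1) ^ (-c) := by
    funext k
    simp only [hf]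
    norm_cast
  rwa [hfe2] at h3

private lemma hasSum_eta_aux {c : ℂ} (hc : 1 < c.re) :
    HasSum (fun j : ℕ => (-1 : ℂ) ^ j * ((j : ℂ) + 1) ^ (-c))
      ((1 - 2 ^ (1 - c)) * riemannZeta c) := by
  have hc0 : c ≠ 0 := fun h => by rw [h] at hc; norm_num at hc
  have hZ := hasSum_zeta_aux hc
  set w : ℕ → ℂ := fun n => (-1) ^ (n + 1) * (n : ℂ) ^ (-c) with hw
  have hfe : (fun k : ℕ => w (2 * k)) = fun k : ℕ => -(2 ^ (-c) * (k : ℂ) ^ (-c)) := by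
    funext k
    simp only [hw]
    rw [show (((2 * k : ℕ) : ℂ)) = ((2 : ℕ) : ℂ) * (k : ℂ) by push_cast; ring,
      natCast_mul_natCast_cpow, pow_succ, pow_mul]
    norm_num
  have he : HasSum (fun k : ℕ => w (2 * k)) (-(2 ^ (-c) * riemannZeta c)) := by
    rw [hfe]; exact (hZ.mul_left _).neg
  have ho : HasSum (fun k : ℕ => w (2 * k + 1)) ((1 - 2 ^ (-c)) * riemannZeta c) := by
    have h3 := hasSum_odd_zeta hc
    have hfe2 : (fun k : ℕ => w (2 * k + 1)) = fun k : ℕ => (2 * (k : ℂ) + 1) ^ (-c) := by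
      funext k
      simp only [hw, pow_succ, pow_mul]
      push_cast
      ring_nf
    rw [hfe2]; exact h3
  have hsum : HasSum w (-(2 ^ (-c) * riemannZeta c) + (1 - 2 ^ (-c)) * riemannZeta c) :=
    he.even_add_odd ho
  have h1 : -(2 ^ (-c) * riemannZeta c) + (1 - 2 ^ (-c)) * riemannZeta c
      = (1 - 2 ^ (1 - c)) * riemannZeta c := by
    have h2 : (2 : ℂ) ^ (1 - c) = 2 * 2 ^ (-c) := by
      rw [sub_eq_add_neg, cpow_add _ _ (two_ne_zero), cpow_one]
    rw [h2]; ring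
  rw [h1] at hsum
  have hshift := (hasSum_nat_add_iff' 1).mpr hsum
  have hw0 : ∑ i ∈ Finset.range 1, w i = 0 := by
    simp [hw, Complex.zero_cpow (neg_ne_zero.mpr hc0)]
  rw [hw0, sub_zero] at hshift
  have hfe3 : (fun n : ℕ => w (n + 1))
      = fun j : ℕ => (-1 : ℂ) ^ j * ((j : ℂ) + 1) ^ (-c) := by
    funext j
    simp only [hw, pow_succ]
    push_cast
    ring_nf
  rwa [hfe3] at hshift

/-- The Mellin transform of `F(x) = Σ_{k≥1} e^{-(2k-1)x}/(1+e^{-(2k-1)x})²` is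
`Γ(s)·ζ(s-1)·ζ(s)·(1-2^{2-s})·(1-2^{-s})` for real `s > 2`. -/
theorem mellin_F (s : ℝ) (hs : 2 < s) :
    ((∫ x in Set.Ioi (0 : ℝ),
        (∑' k : ℕ, Real.exp (-(2 * (k : ℝ) + 1) * x) /
          (1 + Real.exp (-(2 * (k : ℝ) + 1) * x)) ^ 2) * x ^ (s - 1) : ℝ) : ℂ) =
      Complex.Gamma s * riemannZeta ((s : ℂ) - 1) * riemannZeta s *
        (1 - (2 : ℂ) ^ ((2 : ℂ) - s)) * (1 - (2 : ℂ) ^ (-(s : ℂ))) := by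
  have hs1 : (1 : ℝ) < s := by linarith
  have hsre : (0 : ℝ) < ((s : ℂ)).re := by simp; linarith
  set a : ℕ × ℕ → ℂ := fun i => (-1) ^ i.2 * ((i.2 : ℂ) + 1) with ha
  set p : ℕ × ℕ → ℝ := fun i => (2 * i.1 + 1) * (i.2 + 1) with hp
  set F : ℝ → ℂ := fun x => ((∑' k : ℕ, Real.exp (-(2 * (k : ℝ) + 1) * x) /
      (1 + Real.exp (-(2 * (k : ℝ) + 1) * x)) ^ 2 : ℝ) : ℂ) with hF
  -- real summability facts
  have Sk1 : Summable (fun k : ℕ => ((k : ℝ) + 1) ^ (-s)) := by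
    have h0 := (Real.summable_nat_rpow (p := -s)).mpr (by linarith)
    have h2 := h0.comp_injective Nat.succ_injective
    exact h2.congr fun k => by simp only [Function.comp_apply, Nat.succ_eq_add_one]; push_cast; ring_nf
  have Sk : Summable (fun k : ℕ => (2 * (k : ℝ) + 1) ^ (-s)) := by
    refine Summable.of_nonneg_of_le (fun k => Real.rpow_nonneg (by positivity) _)
      (fun k => ?_) Sk1
    exact Real.rpow_le_rpow_of_nonpos (by positivity)
      (by have := Nat.cast_nonneg (α := ℝ) k; linarith) (by linarith)
  have Sj : Summable (fun j : ℕ => ((j : ℝ) + 1) ^ (1 - s)) := by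
    have h0 := (Real.summable_nat_rpow (p := 1 - s)).mpr (by linarith)
    have h2 := h0.comp_injective Nat.succ_injective
    exact h2.congr fun k => by simp only [Function.comp_apply, Nat.succ_eq_add_one]; push_cast; ring_nf
  -- the key summability for hasSum_mellin
  have h_sum : Summable (fun i : ℕ × ℕ => ‖a i‖ / p i ^ ((s : ℂ)).re) := by
    have hprod := Sk.mul_of_nonneg Sj (fun k => Real.rpow_nonneg (by positivity) _)
      (fun j => Real.rpow_nonneg (by positivity) _)
    refine hprod.congr fun i => ?_
    obtain ⟨k, j⟩ := i
    have hx : (0 : ℝ) < 2 * (k : ℝ) + 1 := by positivity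
    have hy : (0 : ℝ) < (j : ℝ) + 1 := by positivity
    have h1 : ‖a (k, j)‖ = (j : ℝ) + 1 := by
      simp only [ha, norm_mul, norm_pow, norm_neg, norm_one, one_pow, one_mul]
      rw [show ((j : ℂ) + 1) = (((j + 1 : ℕ) : ℂ)) by push_cast; ring, Complex.norm_natCast]
      push_cast; ring
    rw [h1, Complex.ofReal_re]
    simp only [hp]
    rw [Real.mul_rpow hx.le hy.le, Real.rpow_neg hx.le, Real.rpow_sub hy, Real.rpow_one]
    have hxs : (2 * (k : ℝ) + 1) ^ s ≠ 0 := ne_of_gt (Real.rpow_pos_of_pos hx s)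
    have hys : ((j : ℝ) + 1) ^ s ≠ 0 := ne_of_gt (Real.rpow_pos_of_pos hy s)
    field_simp
  -- positivity of p
  have hp' : ∀ i : ℕ × ℕ, a i = 0 ∨ 0 < p i := fun i => Or.inr (by simp only [hp]; positivity)
  -- the HasSum hypothesis
  have hFsum : ∀ t ∈ Set.Ioi (0 : ℝ), HasSum (fun i : ℕ × ℕ => a i * Real.exp (-p i * t)) (F t) := by
    intro t ht
    rw [Set.mem_Ioi] at ht
    have hu0 : (0 : ℝ) < Real.exp (-t) := Real.exp_pos _
    have hu1 : Real.exp (-t) < 1 := Real.exp_lt_one_iff.mpr (by linarith)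
    set q : ℕ → ℝ := fun k => Real.exp (-(2 * (k : ℝ) + 1) * t) with hq
    have hq0 : ∀ k, 0 < q k := fun k => Real.exp_pos _
    have hq1 : ∀ k, q k < 1 := fun k => by
      simp only [hq]
      refine Real.exp_lt_one_iff.mpr ?_
      have : (0 : ℝ) ≤ (k : ℝ) := Nat.cast_nonneg k
      nlinarith
    set fr : ℕ × ℕ → ℝ := fun i => (-1 : ℝ) ^ i.2 * ((i.2 : ℝ) + 1) * Real.exp (-p i * t)
      with hfr
    have fiber : ∀ k : ℕ, HasSum (fun j => fr (k, j)) (q k / (1 + q k) ^ 2) := by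
      intro k
      have hr : ‖-q k‖ < 1 := by
        rw [norm_neg, Real.norm_eq_abs, abs_of_pos (hq0 k)]; exact hq1 k
      have A := hasSum_coe_mul_geometric_of_norm_lt_one hr
      have B := hasSum_geometric_of_norm_lt_one hr
      have C := (A.add B).mul_left (q k)
      have hval : q k * (-q k / (1 - -q k) ^ 2 + (1 - -q k)⁻¹) = q k / (1 + q k) ^ 2 := by
        have h1 : (0 : ℝ) < 1 + q k := by linarith [hq0 k]
        rw [sub_neg_eq_add]
        field_simp
        ring
      rw [hval] at C
      have hfe : (fun j : ℕ => q k * ((j : ℝ) * (-q k) ^ j + (-q k) ^ j))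
          = fun j : ℕ => fr (k, j) := by
        funext j
        have hqe : Real.exp (-p (k, j) * t) = q k ^ (j + 1) := by
          simp only [hq]
          rw [← Real.exp_nat_mul]
          congr 1
          simp only [hp]
          push_cast
          ring
        simp only [hfr]
        rw [hqe]
        ring
      rw [hfe] at C
      exact C
    have Sg1 : Summable (fun j : ℕ => ((j : ℝ) + 1) * Real.exp (-t) ^ (j + 1)) := by
      have hnu : ‖Real.exp (-t)‖ < 1 := by rwa [Real.norm_eq_abs, abs_of_pos hu0]
      have A := (hasSum_coe_mul_geometric_of_norm_lt_one hnu).summable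
      have B := summable_geometric_of_lt_one hu0.le hu1
      exact ((A.add B).mul_left (Real.exp (-t))).congr fun j => by ring
    have Sg2 : Summable (fun k : ℕ => Real.exp (-t) ^ (2 * k)) := by
      have h0 : (0 : ℝ) ≤ Real.exp (-t) ^ 2 := by positivity
      have h1 : Real.exp (-t) ^ 2 < 1 := by nlinarith
      exact (summable_geometric_of_lt_one h0 h1).congr fun k => (pow_mul _ 2 k).symm
    have Snorm : Summable (fun i : ℕ × ℕ => ‖fr i‖) := by
      have hprod := Sg2.mul_of_nonneg Sg1 (fun k => by positivity) (fun j => by positivity)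
      refine Summable.of_nonneg_of_le (fun i => norm_nonneg _) (fun i => ?_) hprod
      obtain ⟨k, j⟩ := i
      have hnorm : ‖fr (k, j)‖ = ((j : ℝ) + 1) * Real.exp (-p (k, j) * t) := by
        simp only [hfr, norm_mul, norm_pow, norm_neg, norm_one, one_pow, one_mul,
          Real.norm_eq_abs, Real.abs_exp]
        rw [_root_.abs_of_nonneg (by positivity : (0 : ℝ) ≤ (j : ℝ) + 1)]
      rw [hnorm]
      have hexp : Real.exp (-p (k, j) * t)
          ≤ Real.exp (-t) ^ (2 * k) * Real.exp (-t) ^ (j + 1) := by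
        rw [← Real.exp_nat_mul, ← Real.exp_nat_mul, ← Real.exp_add]
        apply Real.exp_le_exp.mpr
        simp only [hp]
        push_cast
        nlinarith [Nat.cast_nonneg (α := ℝ) k, Nat.cast_nonneg (α := ℝ) j, ht,
          mul_nonneg (mul_nonneg (Nat.cast_nonneg (α := ℝ) k) (Nat.cast_nonneg (α := ℝ) j)) ht.le]
      calc ((j : ℝ) + 1) * Real.exp (-p (k, j) * t)
          ≤ ((j : ℝ) + 1) * (Real.exp (-t) ^ (2 * k) * Real.exp (-t) ^ (j + 1)) :=
            mul_le_mul_of_nonneg_left hexp (by positivity)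
        _ = Real.exp (-t) ^ (2 * k) * (((j : ℝ) + 1) * Real.exp (-t) ^ (j + 1)) := by ring
    have Sfr : Summable fr := Snorm.of_norm
    have Hf := Sfr.hasSum
    have Hg : HasSum (fun k : ℕ => q k / (1 + q k) ^ 2) (∑' i, fr i) :=
      Hf.prod_fiberwise fiber
    have hFt : F t = ((∑' i, fr i : ℝ) : ℂ) := by
      simp only [hF]
      congr 1
      rw [← Hg.tsum_eq]
    have hC : HasSum (fun i : ℕ × ℕ => ((fr i : ℝ) : ℂ)) ((∑' i, fr i : ℝ) : ℂ) :=
      Complex.hasSum_ofReal.mpr Hf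
    have hfe2 : (fun i : ℕ × ℕ => ((fr i : ℝ) : ℂ))
        = fun i : ℕ × ℕ => a i * Real.exp (-p i * t) := by
      funext i
      simp only [hfr, ha]
      push_cast
      ring
    rw [hFt, ← hfe2]
    exact hC
  have hM := hasSum_mellin hp' hsre hFsum h_sum
  -- the Dirichlet series side
  have hres : (1 : ℝ) < ((s : ℂ)).re := by simpa using hs1
  have hres2 : (1 : ℝ) < ((s : ℂ) - 1).re := by simp; linarith
  have hU := hasSum_odd_zeta hres
  have hV := hasSum_eta_aux hres2
  have hUVs : Summable (fun x : ℕ × ℕ => (2 * (x.1 : ℂ) + 1) ^ (-(s : ℂ)) *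
      ((-1 : ℂ) ^ x.2 * ((x.2 : ℂ) + 1) ^ (-((s : ℂ) - 1)))) := by
    apply Summable.of_norm
    have hprod := Sk.mul_of_nonneg Sj (fun k => Real.rpow_nonneg (by positivity) _)
      (fun j => Real.rpow_nonneg (by positivity) _)
    refine hprod.congr fun x => ?_
    obtain ⟨k, j⟩ := x
    rw [norm_mul, norm_mul, norm_pow, norm_neg, norm_one, one_pow, one_mul]
    rw [show (2 * (k : ℂ) + 1) = ((2 * (k : ℝ) + 1 : ℝ) : ℂ) by push_cast; ring,
      show ((j : ℂ) + 1) = (((j : ℝ) + 1 : ℝ) : ℂ) by push_cast; ring]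
    rw [Complex.norm_cpow_eq_rpow_re_of_pos (by positivity) _,
      Complex.norm_cpow_eq_rpow_re_of_pos (by positivity) _]
    rw [show (-(s : ℂ)).re = -s by simp,
      show (-((s : ℂ) - 1)).re = 1 - s by simp [Complex.sub_re]]
  have hUV := (hU.mul hV hUVs).mul_left (Complex.Gamma (s : ℂ))
  have hkey : (fun i : ℕ × ℕ => Complex.Gamma (s : ℂ) * a i / (p i : ℂ) ^ (s : ℂ))
      = fun x : ℕ × ℕ => Complex.Gamma (s : ℂ) * ((2 * (x.1 : ℂ) + 1) ^ (-(s : ℂ)) *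
        ((-1 : ℂ) ^ x.2 * ((x.2 : ℂ) + 1) ^ (-((s : ℂ) - 1)))) := by
    funext x
    obtain ⟨k, j⟩ := x
    have hX0 : ((2 * (k : ℝ) + 1 : ℝ) : ℂ) ≠ 0 := by
      rw [Complex.ofReal_ne_zero]; positivity
    have hY0 : (((j : ℝ) + 1 : ℝ) : ℂ) ≠ 0 := by
      rw [Complex.ofReal_ne_zero]; positivity
    have hpe : ((p (k, j) : ℝ) : ℂ) ^ (s : ℂ)
        = ((2 * (k : ℝ) + 1 : ℝ) : ℂ) ^ (s : ℂ) * (((j : ℝ) + 1 : ℝ) : ℂ) ^ (s : ℂ) := by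
      simp only [hp, Complex.ofReal_mul]
      exact Complex.mul_cpow_ofReal_nonneg (a := 2 * (k : ℝ) + 1) (b := (j : ℝ) + 1)
        (by positivity) (by positivity) _
    have hXc : ((2 * (k : ℝ) + 1 : ℝ) : ℂ) ^ (s : ℂ) ≠ 0 := by
      rw [Ne, Complex.cpow_eq_zero_iff]
      rintro ⟨h1, -⟩
      exact hX0 h1
    have hYc : (((j : ℝ) + 1 : ℝ) : ℂ) ^ (s : ℂ) ≠ 0 := by
      rw [Ne, Complex.cpow_eq_zero_iff]
      rintro ⟨h1, -⟩
      exact hY0 h1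
    simp only [ha]
    rw [hpe]
    rw [show (2 * (k : ℂ) + 1) = ((2 * (k : ℝ) + 1 : ℝ) : ℂ) by push_cast; ring,
      show ((j : ℂ) + 1) = (((j : ℝ) + 1 : ℝ) : ℂ) by push_cast; ring]
    rw [Complex.cpow_neg, show -((s : ℂ) - 1) = 1 - (s : ℂ) by ring,
      Complex.cpow_sub _ _ hY0, Complex.cpow_one]
    field_simp
  rw [hkey] at hM
  have hfinal := hM.unique hUV
  have hLHS : ((∫ x in Set.Ioi (0 : ℝ),
      (∑' k : ℕ, Real.exp (-(2 * (k : ℝ) + 1) * x) /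
        (1 + Real.exp (-(2 * (k : ℝ) + 1) * x)) ^ 2) * x ^ (s - 1) : ℝ) : ℂ)
      = mellin F (s : ℂ) := by
    have h1 : mellin F (s : ℂ) = ∫ t in Set.Ioi (0 : ℝ),
        (((∑' k : ℕ, Real.exp (-(2 * (k : ℝ) + 1) * t) /
          (1 + Real.exp (-(2 * (k : ℝ) + 1) * t)) ^ 2) * t ^ (s - 1) : ℝ) : ℂ) := by
      rw [mellin]
      refine setIntegral_congr_fun measurableSet_Ioi fun t ht => ?_
      rw [Set.mem_Ioi] at ht
      simp only [hF, smul_eq_mul]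
      rw [Complex.ofReal_mul, show ((s : ℂ) - 1) = (((s - 1 : ℝ)) : ℂ) by push_cast; ring,
        ← Complex.ofReal_cpow ht.le]
      ring
    rw [h1]
    exact integral_ofReal.symm
  rw [hLHS, hfinal, show (1 : ℂ) - ((s : ℂ) - 1) = (2 : ℂ) - (s : ℂ) by ring]
  ring
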